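/- Suppose W ∈ ℝ^{n×k} satisfies the WDC with constant ε. Then for any nonzero x, y ∈ ℝ^k, ‖W_{+,x} x − W_{+,y} y‖ ≤ (√(1/2 + ε) + √(2(2ε + θ))) ‖x − y‖, where θ = ∠(x, y). -/

import Mathlib

open scoped BigOperators NNReal
open Real Finset Matrix
open scoped Matrix

noncomputable section

namespace CSGen

/-- Euclidean norm of a vector in `ℝ^m`. -/
def enorm {m : ℕ} (v : Fin m → ℝ) : ℝ := Real.sqrt (∑ i, (v i) ^ 2)

/-- Euclidean inner product. -/
def dotp {m : ℕ} (u v : Fin m → ℝ) : ℝ := ∑ i, u i * v i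

/-- `relu` applied entrywise. -/
def relu {m : ℕ} (v : Fin m → ℝ) : Fin m → ℝ := fun i => max (v i) 0

/-- Zero out the rows of `W` at which the vector `v` is not positive. -/
def rowFilter {n k : ℕ} (W : Matrix (Fin n) (Fin k) ℝ) (v : Fin n → ℝ) :
    Matrix (Fin n) (Fin k) ℝ := fun i j => if 0 < v i then W i j else 0

/-- `W_{+,x} = diag(Wx > 0) W`. -/
def posPart {n k : ℕ} (W : Matrix (Fin n) (Fin k) ℝ) (x : Fin k → ℝ) :
    Matrix (Fin n) (Fin k) ℝ := rowFilter W (W.mulVec x)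

/-- Spectral norm of a matrix (operator norm w.r.t. Euclidean norms). -/
def specNorm {n k : ℕ} (M : Matrix (Fin n) (Fin k) ℝ) : ℝ :=
  ‖LinearMap.toContinuousLinearMap (Matrix.toEuclideanLin M)‖

/-- The angle `∠(x,y) = arccos(⟨x,y⟩/(‖x‖‖y‖))`. -/
def ang {k : ℕ} (x y : Fin k → ℝ) : ℝ :=
  Real.arccos (dotp x y / (enorm x * enorm y))

/-- The matrix of the linear map `M_{x̂↔ŷ}` sending `x̂ ↦ ŷ`, `ŷ ↦ x̂`, and
`z ↦ 0` for `z ⊥ span{x,y}`. -/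
def swapMat {k : ℕ} (x y : Fin k → ℝ) : Matrix (Fin k) (Fin k) ℝ :=
  let xh := (enorm x)⁻¹ • x
  let yh := (enorm y)⁻¹ • y
  let c := dotp xh yh
  if c = 1 then Matrix.vecMulVec xh xh
  else if c = -1 then -(Matrix.vecMulVec xh xh)
  else (1 - c ^ 2)⁻¹ •
    (Matrix.vecMulVec xh yh + Matrix.vecMulVec yh xh
      - c • (Matrix.vecMulVec xh xh + Matrix.vecMulVec yh yh))

/-- The matrix `Q_{x,y}`. -/
def Qmat {k : ℕ} (x y : Fin k → ℝ) : Matrix (Fin k) (Fin k) ℝ :=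
  ((π - ang x y) / (2 * π)) • (1 : Matrix (Fin k) (Fin k) ℝ)
    + (Real.sin (ang x y) / (2 * π)) • swapMat x y

/-- The Weight Distribution Condition with constant `ε`. -/
def WDC {n k : ℕ} (W : Matrix (Fin n) (Fin k) ℝ) (ε : ℝ) : Prop :=
  ∀ x y : Fin k → ℝ, x ≠ 0 → y ≠ 0 →
    specNorm ((posPart W x)ᵀ * posPart W y - Qmat x y) ≤ ε

/-- The Range Restricted Isometry Condition of `A` with respect to `G`,
with constant `ε`. -/
def RRIC {m nd k : ℕ} (A : Matrix (Fin m) (Fin nd) ℝ)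
    (G : (Fin k → ℝ) → (Fin nd → ℝ)) (ε : ℝ) : Prop :=
  ∀ x1 x2 x3 x4 : Fin k → ℝ,
    |dotp (A.mulVec (G x1 - G x2)) (A.mulVec (G x3 - G x4))
        - dotp (G x1 - G x2) (G x3 - G x4)|
      ≤ ε * enorm (G x1 - G x2) * enorm (G x3 - G x4)

/-- Output of the `j`-th layer of the network:
`feat n W d = G = relu(W_d ⋯ relu(W_1 x) ⋯)`. -/
def feat (n : ℕ → ℕ) (W : ∀ i : ℕ, Matrix (Fin (n (i + 1))) (Fin (n i)) ℝ) :
    (j : ℕ) → (Fin (n 0) → ℝ) → (Fin (n j) → ℝ)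
  | 0, x => x
  | (j + 1), x => relu ((W j).mulVec (feat n W j x))

/-- The matrix product `∏_{i=j}^{1} W_{i,+,x}`. -/
def lam (n : ℕ → ℕ) (W : ∀ i : ℕ, Matrix (Fin (n (i + 1))) (Fin (n i)) ℝ) :
    (j : ℕ) → (Fin (n 0) → ℝ) → Matrix (Fin (n j)) (Fin (n 0)) ℝ
  | 0, _ => 1
  | (j + 1), x => rowFilter (W j) ((W j).mulVec (feat n W j x)) * lam n W j x

/-- The empirical risk `f(x) = (1/2)‖A G(x) − (A G(x_*) + e)‖²`. -/
def fobj {m : ℕ} (n : ℕ → ℕ) (W : ∀ i : ℕ, Matrix (Fin (n (i + 1))) (Fin (n i)) ℝ)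
    (d : ℕ) (A : Matrix (Fin m) (Fin (n d)) ℝ) (xs : Fin (n 0) → ℝ) (e : Fin m → ℝ)
    (x : Fin (n 0) → ℝ) : ℝ :=
  (1 / 2) * (enorm (A.mulVec (feat n W d x) - (A.mulVec (feat n W d xs) + e))) ^ 2

/-- `ṽ_x = (∏ W_{i,+,x})ᵀ Aᵀ (A (∏ W_{i,+,x}) x − y)`. -/
def vtil {m : ℕ} (n : ℕ → ℕ) (W : ∀ i : ℕ, Matrix (Fin (n (i + 1))) (Fin (n i)) ℝ)
    (d : ℕ) (A : Matrix (Fin m) (Fin (n d)) ℝ) (xs : Fin (n 0) → ℝ) (e : Fin m → ℝ)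
    (x : Fin (n 0) → ℝ) : Fin (n 0) → ℝ :=
  Matrix.mulVec (lam n W d x)ᵀ (Matrix.mulVec Aᵀ
    (A.mulVec ((lam n W d x).mulVec x) - (A.mulVec (feat n W d xs) + e)))

/-- `g(θ) = arccos((1/π)[(π−θ)cos θ + sin θ])`. -/
def gfun (θ : ℝ) : ℝ := Real.arccos ((1 / π) * ((π - θ) * Real.cos θ + Real.sin θ))

/-- `θ̄_{i,x,y}`. -/
def thetaBar {k : ℕ} (x y : Fin k → ℝ) : ℕ → ℝ
  | 0 => ang x y
  | (i + 1) => gfun (thetaBar x y i)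

/-- `h̃_{x,y}` for a `d`-layer network. -/
def htil {k : ℕ} (d : ℕ) (x y : Fin k → ℝ) : Fin k → ℝ :=
  (((2 : ℝ) ^ d)⁻¹ * ∏ i ∈ Finset.range d, (π - thetaBar x y i) / π) • y
    + (((2 : ℝ) ^ d)⁻¹ * ∑ i ∈ Finset.range d, (Real.sin (thetaBar x y i) / π)
        * ∏ j ∈ Finset.Ico (i + 1) d, (π - thetaBar x y j) / π) •
        (enorm y • (enorm x)⁻¹ • x)

/-- `h_{x,y} = 2^{−d} x − h̃_{x,y}`. -/
def hfun {k : ℕ} (d : ℕ) (x y : Fin k → ℝ) : Fin k → ℝ :=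
  ((2 : ℝ) ^ d)⁻¹ • x - htil d x y

/-- `θ̌_i` with `θ̌_0 = π`. -/
def thetaCheck : ℕ → ℝ
  | 0 => π
  | (i + 1) => gfun (thetaCheck i)

/-- `ρ_d`. -/
def rho (d : ℕ) : ℝ :=
  ∑ i ∈ Finset.range d, (Real.sin (thetaCheck i) / π)
    * ∏ j ∈ Finset.Ico (i + 1) d, (π - thetaCheck j) / π

/-- The expected risk `f^E`. -/
def fE {k : ℕ} (d : ℕ) (xs : Fin k → ℝ) (x : Fin k → ℝ) : ℝ :=
  ((2 : ℝ) ^ (d + 1))⁻¹ * dotp x x - dotp x (htil d x xs)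
    + ((2 : ℝ) ^ (d + 1))⁻¹ * dotp xs xs

/-- Closed ball of radius `r` about `z` in the Euclidean norm. -/
def cball {k : ℕ} (z : Fin k → ℝ) (r : ℝ) : Set (Fin k → ℝ) :=
  {x | enorm (x - z) ≤ r}

/-- The set `S_β`. -/
def Sset {k : ℕ} (d : ℕ) (xs : Fin k → ℝ) (β : ℝ) : Set (Fin k → ℝ) :=
  {x | x ≠ 0 ∧ enorm (hfun d x xs) ≤ ((2 : ℝ) ^ d)⁻¹ * β * max (enorm x) (enorm xs)}



/-! ### Auxiliary lemmas -/

lemma enorm_nonneg' {m : ℕ} (v : Fin m → ℝ) : 0 ≤ enorm v := Real.sqrt_nonneg _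

lemma dotp_self_nonneg {m : ℕ} (v : Fin m → ℝ) : 0 ≤ dotp v v :=
  Finset.sum_nonneg fun i _ => mul_self_nonneg _

lemma dotp_comm {m : ℕ} (u v : Fin m → ℝ) : dotp u v = dotp v u := by
  simp [dotp, mul_comm]

lemma enorm_sq {m : ℕ} (v : Fin m → ℝ) : enorm v ^ 2 = dotp v v := by
  rw [enorm, Real.sq_sqrt (Finset.sum_nonneg fun i _ => sq_nonneg _)]
  simp [dotp, sq]

lemma dotp_sq_le {m : ℕ} (p u : Fin m → ℝ) : (dotp p u) ^ 2 ≤ dotp p p * dotp u u := by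
  simpa [dotp, sq] using Finset.sum_mul_sq_le_sq_mul_sq Finset.univ p u

lemma abs_dotp_le {m : ℕ} (u v : Fin m → ℝ) : |dotp u v| ≤ enorm u * enorm v := by
  rw [← Real.sqrt_sq_eq_abs, enorm, enorm,
    ← Real.sqrt_mul (Finset.sum_nonneg fun i _ => sq_nonneg _)]
  refine Real.sqrt_le_sqrt ?_
  simpa [dotp, sq] using Finset.sum_mul_sq_le_sq_mul_sq Finset.univ u v

lemma dotp_mulVec_left {n k : ℕ} (A : Matrix (Fin n) (Fin k) ℝ) (u : Fin k → ℝ)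
    (v : Fin n → ℝ) : dotp (A.mulVec u) v = dotp u (Aᵀ.mulVec v) := by
  simp only [dotp, Matrix.mulVec, dotProduct, Matrix.transpose_apply, Finset.sum_mul,
    Finset.mul_sum]
  rw [Finset.sum_comm]
  refine Finset.sum_congr rfl fun j _ => Finset.sum_congr rfl fun i _ => by ring

lemma dotp_sub_right {m : ℕ} (u v w : Fin m → ℝ) : dotp u (v - w) = dotp u v - dotp u w := by
  simp [dotp, mul_sub, Finset.sum_sub_distrib]

lemma dotp_sub_left {m : ℕ} (u v w : Fin m → ℝ) : dotp (u - v) w = dotp u w - dotp v w := by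
  simp [dotp, sub_mul, Finset.sum_sub_distrib]

lemma dotp_add_right {m : ℕ} (u v w : Fin m → ℝ) : dotp u (v + w) = dotp u v + dotp u w := by
  simp [dotp, mul_add, Finset.sum_add_distrib]

lemma dotp_neg_right {m : ℕ} (u v : Fin m → ℝ) : dotp u (-v) = - dotp u v := by
  simp [dotp]

lemma dotp_smul_right {m : ℕ} (a : ℝ) (u v : Fin m → ℝ) : dotp u (a • v) = a * dotp u v := by
  simp [dotp, Finset.mul_sum]; exact Finset.sum_congr rfl fun i _ => by ring

lemma dotp_smul_left {m : ℕ} (a : ℝ) (u v : Fin m → ℝ) : dotp (a • u) v = a * dotp u v := by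
  simp [dotp, Finset.mul_sum]; exact Finset.sum_congr rfl fun i _ => by ring

lemma dotp_self_pos {m : ℕ} {x : Fin m → ℝ} (hx : x ≠ 0) : 0 < dotp x x := by
  obtain ⟨i, hi⟩ := Function.ne_iff.mp hx
  exact Finset.sum_pos' (fun j _ => mul_self_nonneg _)
    ⟨i, Finset.mem_univ i, mul_self_pos.mpr hi⟩

lemma enorm_pos {m : ℕ} {x : Fin m → ℝ} (hx : x ≠ 0) : 0 < enorm x := by
  rw [enorm]; exact Real.sqrt_pos.mpr (by simpa [dotp, sq] using dotp_self_pos hx)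

lemma enorm_euclidean {m : ℕ} (v : Fin m → ℝ) :
    ‖(WithLp.equiv 2 (Fin m → ℝ)).symm v‖ = enorm v := by
  rw [EuclideanSpace.norm_eq]; simp [enorm, Real.norm_eq_abs, sq_abs]

lemma enorm_add_le {m : ℕ} (u v : Fin m → ℝ) : enorm (u + v) ≤ enorm u + enorm v := by
  rw [← enorm_euclidean, ← enorm_euclidean u, ← enorm_euclidean v]
  simpa using norm_add_le ((WithLp.equiv 2 (Fin m → ℝ)).symm u)
    ((WithLp.equiv 2 (Fin m → ℝ)).symm v)

lemma specNorm_nonneg {n k : ℕ} (M : Matrix (Fin n) (Fin k) ℝ) : 0 ≤ specNorm M :=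
  norm_nonneg _

lemma enorm_mulVec_le {n k : ℕ} (M : Matrix (Fin n) (Fin k) ℝ) (v : Fin k → ℝ) :
    enorm (M.mulVec v) ≤ specNorm M * enorm v := by
  have h := (LinearMap.toContinuousLinearMap (Matrix.toEuclideanLin M)).le_opNorm
    ((WithLp.equiv 2 (Fin k → ℝ)).symm v)
  rw [LinearMap.coe_toContinuousLinearMap'] at h
  rwa [show (Matrix.toEuclideanLin M) ((WithLp.equiv 2 (Fin k → ℝ)).symm v)
      = (WithLp.equiv 2 (Fin n → ℝ)).symm (M.mulVec v) from rfl, enorm_euclidean,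
    enorm_euclidean] at h

lemma abs_dotp_mulVec_le {n k : ℕ} (M : Matrix (Fin n) (Fin k) ℝ) (u : Fin n → ℝ)
    (v : Fin k → ℝ) : |dotp u (M.mulVec v)| ≤ specNorm M * enorm u * enorm v := by
  calc |dotp u (M.mulVec v)| ≤ enorm u * enorm (M.mulVec v) := abs_dotp_le _ _
  _ ≤ enorm u * (specNorm M * enorm v) :=
      mul_le_mul_of_nonneg_left (enorm_mulVec_le M v) (enorm_nonneg' u)
  _ = specNorm M * enorm u * enorm v := by ring

lemma rowFilter_mulVec {n k : ℕ} (W : Matrix (Fin n) (Fin k) ℝ) (v : Fin n → ℝ)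
    (z : Fin k → ℝ) (i : Fin n) :
    (rowFilter W v).mulVec z i = if 0 < v i then W.mulVec z i else 0 := by
  simp only [rowFilter, Matrix.mulVec, dotProduct]
  split_ifs <;> simp

lemma dotp_vecMulVec {k : ℕ} (p q u : Fin k → ℝ) :
    dotp u ((Matrix.vecMulVec p q).mulVec u) = dotp u p * dotp q u := by
  simp only [dotp, Matrix.mulVec, Matrix.vecMulVec_apply, dotProduct]
  rw [Finset.sum_mul_sum]
  exact Finset.sum_congr rfl fun i _ => by
    rw [Finset.mul_sum]; exact Finset.sum_congr rfl fun j _ => by ring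

lemma ang_nonneg {k : ℕ} (x y : Fin k → ℝ) : 0 ≤ ang x y := Real.arccos_nonneg _

lemma ang_le_pi {k : ℕ} (x y : Fin k → ℝ) : ang x y ≤ π := Real.arccos_le_pi _

lemma ang_comm {k : ℕ} (x y : Fin k → ℝ) : ang x y = ang y x := by
  rw [ang, ang, dotp_comm, mul_comm]

lemma ang_self {k : ℕ} {x : Fin k → ℝ} (hx : x ≠ 0) : ang x x = 0 := by
  have h : enorm x * enorm x = dotp x x := by rw [← enorm_sq]; ring
  rw [ang, h, div_self (ne_of_gt (dotp_self_pos hx)), Real.arccos_one]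

lemma unit_dotp {k : ℕ} {x : Fin k → ℝ} (hx : x ≠ 0) :
    dotp ((enorm x)⁻¹ • x) ((enorm x)⁻¹ • x) = 1 := by
  have h := enorm_pos hx
  have h2 : dotp x x = enorm x * enorm x := by rw [← enorm_sq]; ring
  rw [dotp_smul_left, dotp_smul_right, h2]
  field_simp

/-- The projection inequality `a² + b² - 2abc ≤ (1-c²) t`. -/
lemma proj_ineq {k : ℕ} (xh yh u : Fin k → ℝ) (hxx : dotp xh xh = 1) (hyy : dotp yh yh = 1) :
    dotp xh u ^ 2 + dotp yh u ^ 2 - 2 * dotp xh u * dotp yh u * dotp xh yh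
      ≤ (1 - dotp xh yh ^ 2) * dotp u u := by
  set a := dotp xh u with ha
  set b := dotp yh u with hb
  set c := dotp xh yh with hc
  set t := dotp u u with ht
  have hc2 : c ^ 2 ≤ 1 := by
    have := dotp_sq_le xh yh; rw [hxx, hyy] at this; simpa [← hc] using this
  have htn : 0 ≤ t := dotp_self_nonneg u
  rcases eq_or_lt_of_le hc2 with h1 | h1
  · have hvv : dotp (xh - c • yh) (xh - c • yh) = 0 := by
      simp only [dotp_sub_left, dotp_sub_right, dotp_smul_left, dotp_smul_right, hxx, hyy,
        dotp_comm yh xh]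
      simp only [← hc]
      nlinarith [h1]
    have hvu : (dotp (xh - c • yh) u) ^ 2 ≤ 0 := by
      have := dotp_sq_le (xh - c • yh) u; rw [hvv] at this; simpa [← ht] using this
    have hvu0 : dotp (xh - c • yh) u = 0 := by
      have := sq_nonneg (dotp (xh - c • yh) u); nlinarith
    have hacb : a - c * b = 0 := by
      rw [dotp_sub_left, dotp_smul_left] at hvu0
      simpa [← ha, ← hb] using hvu0
    nlinarith [h1, hacb, sq_nonneg b]
  · have hw : 0 ≤ dotp ((1 - c^2) • u - (a - b*c) • xh - (b - a*c) • yh)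
        ((1 - c^2) • u - (a - b*c) • xh - (b - a*c) • yh) := dotp_self_nonneg _
    have hexp : dotp ((1 - c^2) • u - (a - b*c) • xh - (b - a*c) • yh)
        ((1 - c^2) • u - (a - b*c) • xh - (b - a*c) • yh)
        = (1 - c^2) * ((1 - c^2) * t - (a^2 + b^2 - 2*a*b*c)) := by
      simp only [dotp_sub_left, dotp_sub_right, dotp_smul_left, dotp_smul_right, hxx, hyy,
        dotp_comm yh xh, dotp_comm u xh, dotp_comm u yh]
      simp only [← hc, ← ha, ← hb, ← ht]; ring
    nlinarith [hw, hexp]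

lemma abs_dotp_swap_le {k : ℕ} {x y : Fin k → ℝ} (hx : x ≠ 0) (hy : y ≠ 0) (u : Fin k → ℝ) :
    |dotp u ((swapMat x y).mulVec u)| ≤ dotp u u := by
  set xh := (enorm x)⁻¹ • x with hxh
  set yh := (enorm y)⁻¹ • y with hyh
  have hxx : dotp xh xh = 1 := unit_dotp hx
  have hyy : dotp yh yh = 1 := unit_dotp hy
  set c := dotp xh yh with hc
  set a := dotp xh u with ha
  set b := dotp yh u with hb
  set t := dotp u u with ht
  have htn : 0 ≤ t := dotp_self_nonneg u
  have hc2 : c ^ 2 ≤ 1 := by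
    have := dotp_sq_le xh yh; rw [hxx, hyy] at this; simpa [← hc] using this
  have ha2 : a ^ 2 ≤ t := by
    have := dotp_sq_le xh u; rw [hxx] at this; simpa [← ha, ← ht] using this
  rw [swapMat]
  simp only [← hxh, ← hyh, ← hc]
  split_ifs with h1 h2
  · rw [dotp_vecMulVec, dotp_comm u xh, ← ha]
    calc |a * a| = a ^ 2 := by rw [abs_mul_self a]; ring
    _ ≤ t := ha2
  · rw [Matrix.neg_mulVec, dotp_neg_right, dotp_vecMulVec, dotp_comm u xh, ← ha, abs_neg]
    calc |a * a| = a ^ 2 := by rw [abs_mul_self a]; ring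
    _ ≤ t := ha2
  · have hc2' : c ^ 2 < 1 := by
      rcases lt_or_eq_of_le hc2 with h | h
      · exact h
      · exfalso
        have hz : (c - 1) * (c + 1) = 0 := by nlinarith [h]
        rcases mul_eq_zero.mp hz with h' | h'
        · exact h1 (by linarith)
        · exact h2 (by linarith)
    have hpos : (0:ℝ) < 1 - c ^ 2 := by linarith
    have hcl : -1 < c := by nlinarith [hc2']
    have hcu : c < 1 := by nlinarith [hc2']
    have hS := proj_ineq xh yh u hxx hyy
    simp only [← hc, ← ha, ← hb, ← ht] at hS
    rw [Matrix.smul_mulVec, dotp_smul_right, Matrix.sub_mulVec, Matrix.add_mulVec,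
      Matrix.smul_mulVec, Matrix.add_mulVec, dotp_sub_right, dotp_add_right,
      dotp_smul_right, dotp_add_right]
    rw [dotp_vecMulVec, dotp_vecMulVec, dotp_vecMulVec, dotp_vecMulVec]
    rw [dotp_comm u xh, dotp_comm u yh]
    simp only [← ha, ← hb, ← hc]
    rw [abs_mul, abs_inv, abs_of_pos hpos]
    rw [inv_mul_le_iff₀ hpos]
    calc |a * b + b * a - c * (a * a + b * b)|
        ≤ a ^ 2 + b ^ 2 - 2 * a * b * c := by
          rw [abs_le]
          constructor <;> nlinarith [mul_nonneg (by linarith : (0:ℝ) ≤ 1 + c) (sq_nonneg (a - b)),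
            mul_nonneg (by linarith : (0:ℝ) ≤ 1 - c) (sq_nonneg (a + b))]
      _ ≤ (1 - c ^ 2) * t := hS

lemma dotp_Qmat {k : ℕ} (x y u : Fin k → ℝ) :
    dotp u ((Qmat x y).mulVec u) = ((π - ang x y)/(2*π)) * dotp u u
      + (Real.sin (ang x y)/(2*π)) * dotp u ((swapMat x y).mulVec u) := by
  rw [Qmat, Matrix.add_mulVec, Matrix.smul_mulVec, Matrix.smul_mulVec,
    Matrix.one_mulVec, dotp_add_right, dotp_smul_right, dotp_smul_right]

lemma dotp_Qself {k : ℕ} {x : Fin k → ℝ} (hx : x ≠ 0) (u : Fin k → ℝ) :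
    dotp u ((Qmat x x).mulVec u) = 1/2 * dotp u u := by
  have hc : (π - 0) / (2 * π) = 1 / 2 := by
    have := Real.pi_ne_zero
    rw [sub_zero]
    field_simp
  rw [dotp_Qmat, ang_self hx, Real.sin_zero, zero_div, zero_mul, add_zero, hc]

lemma le_sqrt_mul_of_sq_le {r s e : ℝ} (hr : 0 ≤ r) (hs : 0 ≤ s) (he : 0 ≤ e)
    (h : r ^ 2 ≤ s * e ^ 2) : r ≤ Real.sqrt s * e := by
  rw [← Real.sqrt_sq hr]
  calc Real.sqrt (r ^ 2) ≤ Real.sqrt (s * e ^ 2) := Real.sqrt_le_sqrt h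
  _ = Real.sqrt s * e := by rw [Real.sqrt_mul hs, Real.sqrt_sq he]

set_option maxHeartbeats 2000000 in
theorem statement_15 (n k : ℕ) (W : Matrix (Fin n) (Fin k) ℝ) (ε : ℝ)
    (hW : WDC W ε) :
    ∀ x y : Fin k → ℝ, x ≠ 0 → y ≠ 0 →
      enorm ((posPart W x).mulVec x - (posPart W y).mulVec y)
        ≤ (Real.sqrt (1 / 2 + ε) + Real.sqrt (2 * (2 * ε + ang x y)))
            * enorm (x - y) := by
  intro x y hx hy
  have hε : 0 ≤ ε :=
    (specNorm_nonneg ((posPart W x)ᵀ * posPart W x - Qmat x x)).trans (hW x x hx hx)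
  set θ := ang x y with hθdef
  have hθ0 : 0 ≤ θ := ang_nonneg x y
  have hθπ : θ ≤ π := ang_le_pi x y
  have hπ : (0:ℝ) < π := Real.pi_pos
  set u := x - y with hu
  set t := dotp u u with htdef
  have htn : 0 ≤ t := dotp_self_nonneg u
  have ht2 : t = enorm u ^ 2 := by rw [enorm_sq]
  -- generic WDC quadratic-form bound
  have quad : ∀ p q : Fin k → ℝ, p ≠ 0 → q ≠ 0 →
      |dotp u (((posPart W p)ᵀ * posPart W q).mulVec u) - dotp u ((Qmat p q).mulVec u)|
        ≤ ε * t := by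
    intro p q hp hq
    have h1 := hW p q hp hq
    have h2 := abs_dotp_mulVec_le ((posPart W p)ᵀ * posPart W q - Qmat p q) u u
    rw [Matrix.sub_mulVec, dotp_sub_right] at h2
    refine h2.trans ?_
    have h3 : enorm u * enorm u = t := by rw [ht2]; ring
    rw [mul_assoc, h3]
    exact mul_le_mul_of_nonneg_right h1 htn
  -- first term
  have hQsx : dotp u ((Qmat x x).mulVec u) = 1/2 * t := by
    rw [dotp_Qself hx u]
  have hQsy : dotp u ((Qmat y y).mulVec u) = 1/2 * t := by
    rw [dotp_Qself hy u]
  have hFxx : dotp u (((posPart W x)ᵀ * posPart W x).mulVec u) ≤ (1/2 + ε) * t := by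
    have h := (abs_le.mp (quad x x hx hx)).2; rw [hQsx] at h; linarith
  have hFyy : dotp u (((posPart W y)ᵀ * posPart W y).mulVec u) ≤ (1/2 + ε) * t := by
    have h := (abs_le.mp (quad y y hy hy)).2; rw [hQsy] at h; linarith
  have hid1 : enorm ((posPart W x).mulVec u) ^ 2
      = dotp u (((posPart W x)ᵀ * posPart W x).mulVec u) := by
    rw [enorm_sq, dotp_mulVec_left, Matrix.mulVec_mulVec]
  have hT1 : enorm ((posPart W x).mulVec u) ≤ Real.sqrt (1/2 + ε) * enorm u := by
    refine le_sqrt_mul_of_sq_le (enorm_nonneg' _) (by linarith) (enorm_nonneg' _) ?_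
    rw [hid1, ← ht2]; exact hFxx
  -- second term : pointwise bound
  have hptw : ∀ i, ((posPart W x - posPart W y).mulVec y) i ^ 2
      ≤ ((posPart W x - posPart W y).mulVec u) i ^ 2 := by
    intro i
    rw [hu, Matrix.mulVec_sub]
    simp only [Matrix.sub_mulVec, Pi.sub_apply, posPart, rowFilter_mulVec]
    by_cases h1 : 0 < W.mulVec x i <;> by_cases h2 : 0 < W.mulVec y i <;>
      simp only [h1, h2, if_true, if_false, sub_self, sub_zero, zero_sub]
    · simp
    · push_neg at h2
      nlinarith [mul_pos h1 (by linarith : 0 < W.mulVec x i - 2 * W.mulVec y i)]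
    · push_neg at h1
      nlinarith [mul_nonneg (by linarith : 0 ≤ -(W.mulVec x i))
        (by linarith : 0 ≤ 2 * W.mulVec y i - W.mulVec x i)]
    · simp
  have hmono : enorm ((posPart W x - posPart W y).mulVec y)
      ≤ enorm ((posPart W x - posPart W y).mulVec u) :=
    Real.sqrt_le_sqrt (Finset.sum_le_sum fun i _ => hptw i)
  -- second term : quadratic bound
  have hid2 : enorm ((posPart W x - posPart W y).mulVec u) ^ 2
      = dotp u (((posPart W x)ᵀ * posPart W x).mulVec u)
        - dotp u (((posPart W x)ᵀ * posPart W y).mulVec u)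
        - dotp u (((posPart W y)ᵀ * posPart W x).mulVec u)
        + dotp u (((posPart W y)ᵀ * posPart W y).mulVec u) := by
    rw [enorm_sq, dotp_mulVec_left, Matrix.mulVec_mulVec, Matrix.transpose_sub,
      Matrix.sub_mul, Matrix.mul_sub, Matrix.mul_sub, Matrix.sub_mulVec, Matrix.sub_mulVec,
      Matrix.sub_mulVec, dotp_sub_right, dotp_sub_right, dotp_sub_right]
    ring
  have hsin0 : 0 ≤ Real.sin θ := Real.sin_nonneg_of_nonneg_of_le_pi hθ0 hθπ
  have hB0 : 0 ≤ Real.sin θ / (2*π) := div_nonneg hsin0 (by positivity)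
  have hangyx : ang y x = θ := by rw [← ang_comm]
  have hmxy := abs_dotp_swap_le hx hy u
  have hmyx := abs_dotp_swap_le hy hx u
  simp only [← htdef] at hmxy hmyx
  have hQxy : ((π - θ)/(2*π)) * t - (Real.sin θ/(2*π)) * t
      ≤ dotp u ((Qmat x y).mulVec u) := by
    rw [dotp_Qmat]
    simp only [← hθdef, ← htdef]
    nlinarith [mul_le_mul_of_nonneg_left (abs_le.mp hmxy).1 hB0]
  have hQyx : ((π - θ)/(2*π)) * t - (Real.sin θ/(2*π)) * t
      ≤ dotp u ((Qmat y x).mulVec u) := by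
    rw [dotp_Qmat, hangyx]
    simp only [← htdef]
    nlinarith [mul_le_mul_of_nonneg_left (abs_le.mp hmyx).1 hB0]
  have hFxy : ((π - θ)/(2*π)) * t - (Real.sin θ/(2*π)) * t - ε * t
      ≤ dotp u (((posPart W x)ᵀ * posPart W y).mulVec u) := by
    have h := (abs_le.mp (quad x y hx hy)).1; linarith
  have hFyx : ((π - θ)/(2*π)) * t - (Real.sin θ/(2*π)) * t - ε * t
      ≤ dotp u (((posPart W y)ᵀ * posPart W x).mulVec u) := by
    have h := (abs_le.mp (quad y x hy hx)).1; linarith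
  have hcoef : 1 - 2*((π - θ)/(2*π)) + 2*(Real.sin θ/(2*π)) ≤ 2*θ := by
    have hs : Real.sin θ ≤ θ := Real.sin_le hθ0
    have h1 : 1 - 2*((π - θ)/(2*π)) + 2*(Real.sin θ/(2*π)) = (θ + Real.sin θ)/π := by
      field_simp; ring
    rw [h1, div_le_iff₀ hπ]
    have hπ1 : (1:ℝ) ≤ π := by linarith [Real.pi_gt_three]
    linarith [hs, mul_nonneg hθ0 (by linarith : (0:ℝ) ≤ π - 1)]
  have hT2sq : enorm ((posPart W x - posPart W y).mulVec u) ^ 2 ≤ 2*(2*ε + θ) * t := by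
    rw [hid2]
    nlinarith [hFxx, hFyy, hFxy, hFyx, mul_le_mul_of_nonneg_right hcoef htn]
  have hT2 : enorm ((posPart W x - posPart W y).mulVec y)
      ≤ Real.sqrt (2*(2*ε + θ)) * enorm u := by
    refine le_trans hmono (le_sqrt_mul_of_sq_le (enorm_nonneg' _) (by positivity)
      (enorm_nonneg' _) ?_)
    rw [← ht2]; exact hT2sq
  -- combine
  have hdecomp : (posPart W x).mulVec x - (posPart W y).mulVec y
      = (posPart W x).mulVec u + (posPart W x - posPart W y).mulVec y := by
    rw [hu, Matrix.mulVec_sub, Matrix.sub_mulVec]; abel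
  rw [hdecomp]
  calc enorm ((posPart W x).mulVec u + (posPart W x - posPart W y).mulVec y)
      ≤ enorm ((posPart W x).mulVec u) + enorm ((posPart W x - posPart W y).mulVec y) :=
        enorm_add_le _ _
    _ ≤ Real.sqrt (1/2 + ε) * enorm u + Real.sqrt (2*(2*ε + θ)) * enorm u :=
        add_le_add hT1 hT2
    _ = (Real.sqrt (1/2 + ε) + Real.sqrt (2*(2*ε + θ))) * enorm u := by ring


end CSGen
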